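/- Let n ≥ 3 and let I be a finite set of diagonals of the convex (n+3)-gon G_{n+3} with |I| > q(n)+1. Then the non-crossing graph G(I) is connected. -/

import Mathlib

/-- A diagonal of the convex `N`-gon with vertices labelled `1, …, N` in cyclic order:
a pair `(i, j)` with `1 ≤ i`, `i + 2 ≤ j ≤ N`, excluding the edge `(1, N)`. -/
def IsDiag (N : ℕ) (d : ℕ × ℕ) : Prop :=
  1 ≤ d.1 ∧ d.1 + 2 ≤ d.2 ∧ d.2 ≤ N ∧ ¬(d.1 = 1 ∧ d.2 = N)

instance (N : ℕ) (d : ℕ × ℕ) : Decidable (IsDiag N d) := by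
  unfold IsDiag; infer_instance

/-- Two diagonals of a convex polygon cross (intersect at an interior point). -/
def Crosses (d e : ℕ × ℕ) : Prop :=
  (d.1 < e.1 ∧ e.1 < d.2 ∧ d.2 < e.2) ∨ (e.1 < d.1 ∧ d.1 < e.2 ∧ e.2 < d.2)

instance (d e : ℕ × ℕ) : Decidable (Crosses d e) := by
  unfold Crosses; infer_instance

/-- The finite set of all diagonals of the convex `N`-gon. -/
def Diags (N : ℕ) : Finset (ℕ × ℕ) :=
  (Finset.range (N + 1) ×ˢ Finset.range (N + 1)).filter (IsDiag N)
/-- The non-crossing graph `G(I)` on a finite set `I` of diagonals: two distinct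
diagonals are adjacent iff they do not cross. Its connected components correspond to
the connected components of the union `P_I` of the facets of the associahedron `Asⁿ`
indexed by `I`. -/
def ncGraph (I : Finset (ℕ × ℕ)) : SimpleGraph {x // x ∈ I} where
  Adj d e := d ≠ e ∧ ¬ Crosses d.1 e.1
  symm := ⟨by
    rintro d e ⟨h1, h2⟩
    exact ⟨h1.symm, fun h => h2 (Or.symm h)⟩⟩
  loopless := ⟨fun d h => h.1 rfl⟩

/-- `G(I)` has exactly two connected components, `I₁` and `I₂`: they partition `I`,
are nonempty, and two diagonals of `I` are joined by a path in the non-crossing graph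
iff they lie in the same part. -/
def TwoComponents (I I₁ I₂ : Finset (ℕ × ℕ)) : Prop :=
  I₁ ∪ I₂ = I ∧ Disjoint I₁ I₂ ∧ I₁.Nonempty ∧ I₂.Nonempty ∧
    ∀ (d : ℕ × ℕ) (hd : d ∈ I) (e : ℕ × ℕ) (he : e ∈ I),
      (ncGraph I).Reachable ⟨d, hd⟩ ⟨e, he⟩ ↔
        (d ∈ I₁ ∧ e ∈ I₁) ∨ (d ∈ I₂ ∧ e ∈ I₂)

/-- `q(n) = n(n+2)/4` for even `n` and `q(n) = (n+1)²/4` for odd `n`. -/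
def q (n : ℕ) : ℕ := if Even n then n * (n + 2) / 4 else (n + 1) ^ 2 / 4


/- ------------------- auxiliary development ------------------- -/

section Aux

def Good (N : ℕ) (d : ℕ × ℕ) : Prop := 1 ≤ d.1 ∧ d.1 < d.2 ∧ d.2 ≤ N

def Bound (N : ℕ) : Prop :=
  ∀ (A B : Finset (ℕ × ℕ)), (∀ d ∈ A, Good N d) → (∀ d ∈ B, Good N d) →
    A.Nonempty → B.Nonempty → (∀ a ∈ A, ∀ b ∈ B, Crosses a b) →
    A.card + B.card ≤ (N - 2) ^ 2 / 4 + 1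

lemma crosses_symm {d e : ℕ × ℕ} (h : Crosses d e) : Crosses e d := Or.symm h

lemma amgm (a b : ℕ) : a * b ≤ (a + b) ^ 2 / 4 := by
  rw [Nat.le_div_iff_mul_le (by norm_num)]
  nlinarith [two_mul_le_add_sq a b]

lemma sq_ineq (u v : ℕ) (h : u + 3 ≤ v) : v + u ^ 2 / 4 ≤ v ^ 2 / 4 + 1 := by
  have key : u ^ 2 + 4 * v ≤ v ^ 2 + 4 * 1 := by
    obtain ⟨z, rfl⟩ : ∃ z, v = u + 3 + z := ⟨v - (u + 3), by omega⟩
    nlinarith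
  have e1 : (u ^ 2 + 4 * v) / 4 = u ^ 2 / 4 + v := Nat.add_mul_div_left _ _ (by norm_num)
  have e2 : (v ^ 2 + 4 * 1) / 4 = v ^ 2 / 4 + 1 := Nat.add_mul_div_left _ _ (by norm_num)
  have e3 : (u ^ 2 + 4 * v) / 4 ≤ (v ^ 2 + 4 * 1) / 4 := Nat.div_le_div_right key
  omega

lemma mixed_arith (N w a' b' : ℕ) (h1 : 1 ≤ a') (h2 : a' + 2 ≤ w) (h3 : w + 2 ≤ b')
    (h4 : b' ≤ N) :
    (a' + (N + 1 - b')) + (w - 1 - a') * (b' - 1 - w) ≤ (N - 2) ^ 2 / 4 + 1 := by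
  obtain ⟨P, rfl⟩ : ∃ P, w = a' + P + 2 := ⟨w - a' - 2, by omega⟩
  obtain ⟨S, rfl⟩ : ∃ S, b' = a' + P + 2 + S + 2 := ⟨b' - (a' + P + 2) - 2, by omega⟩
  obtain ⟨y, rfl⟩ : ∃ y, N = a' + P + 2 + S + 2 + y := ⟨N - (a' + P + 2 + S + 2), by omega⟩
  rw [show a' + P + 2 + S + 2 + y + 1 - (a' + P + 2 + S + 2) = y + 1 by omega]
  rw [show a' + P + 2 - 1 - a' = P + 1 by omega]
  rw [show a' + P + 2 + S + 2 - 1 - (a' + P + 2) = S + 1 by omega]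
  rw [show a' + P + 2 + S + 2 + y - 2 = a' + P + S + y + 2 by omega]
  have hPS : P * S ≤ (P + S) ^ 2 / 4 := amgm P S
  have hsq : (a' + P + S + y + 2) + (P + S) ^ 2 / 4 ≤ (a' + P + S + y + 2) ^ 2 / 4 + 1 :=
    sq_ineq (P + S) (a' + P + S + y + 2) (by omega)
  have hexp : (P + 1) * (S + 1) = P * S + P + S + 1 := by ring
  omega

lemma star_low_arith (N w m a' : ℕ) (h1 : 1 ≤ m) (h2 : m ≤ a') (h3 : a' + 2 ≤ w)
    (h4 : w ≤ N) :
    (a' - m + 1) + ((w - 1 - a') * (N - w) + (m - 1) * (w - 1 - a'))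
      ≤ (N - 2) ^ 2 / 4 + 1 := by
  obtain ⟨c, rfl⟩ : ∃ c, a' = m + c := ⟨a' - m, by omega⟩
  obtain ⟨P, rfl⟩ : ∃ P, w = m + c + P + 2 := ⟨w - (m + c) - 2, by omega⟩
  obtain ⟨x, rfl⟩ : ∃ x, N = m + c + P + 2 + x := ⟨N - (m + c + P + 2), by omega⟩
  obtain ⟨m', rfl⟩ : ∃ m', m = m' + 1 := ⟨m - 1, by omega⟩
  rw [show m' + 1 + c - (m' + 1) + 1 = c + 1 by omega]
  rw [show m' + 1 + c + P + 2 - 1 - (m' + 1 + c) = P + 1 by omega]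
  rw [show m' + 1 + c + P + 2 + x - (m' + 1 + c + P + 2) = x by omega]
  rw [show m' + 1 - 1 = m' by omega]
  rw [show m' + 1 + c + P + 2 + x - 2 = m' + c + P + x + 1 by omega]
  have hA : (P + 1) * x + m' * (P + 1) + (P + 1) * c = (P + 1) * (x + m' + c) := by ring
  have hB : c ≤ (P + 1) * c := Nat.le_mul_of_pos_left c (by omega)
  have hC : (P + 1) * (x + m' + c) ≤ ((P + 1) + (x + m' + c)) ^ 2 / 4 := amgm _ _
  rw [show (P + 1) + (x + m' + c) = m' + c + P + x + 1 by ring] at hC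
  omega

lemma arith1 (N : ℕ) (hN : 5 ≤ N) :
    2 * ((N - 2) ^ 2 / 4 + 2) < N * ((N - 2) / 2 + 1) := by
  obtain ⟨t, ht⟩ : ∃ t, N = 2 * t + 5 ∨ N = 2 * t + 6 := ⟨(N - 5) / 2, by omega⟩
  rcases ht with rfl | rfl
  · rw [show 2 * t + 5 - 2 = 2 * t + 3 by omega]
    rw [show (2 * t + 3) ^ 2 = 4 * (t * t + 3 * t + 2) + 1 by ring]
    rw [show (2 * t + 3) / 2 = t + 1 by omega]
    rw [show (2 * t + 5) * (t + 1 + 1) = 2 * (t * t) + 9 * t + 10 by ring]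
    omega
  · rw [show 2 * t + 6 - 2 = 2 * t + 4 by omega]
    rw [show (2 * t + 4) ^ 2 = 4 * (t * t + 4 * t + 4) by ring]
    rw [show (2 * t + 4) / 2 = t + 2 by omega]
    rw [show (2 * t + 6) * (t + 2 + 1) = 2 * (t * t) + 12 * t + 18 by ring]
    omega

lemma arith2 (N : ℕ) (hN : 5 ≤ N) :
    (N - 3) ^ 2 / 4 + (N - 2) / 2 = (N - 2) ^ 2 / 4 := by
  obtain ⟨t, ht⟩ : ∃ t, N = 2 * t + 5 ∨ N = 2 * t + 6 := ⟨(N - 5) / 2, by omega⟩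
  rcases ht with rfl | rfl
  · rw [show 2 * t + 5 - 3 = 2 * t + 2 by omega, show 2 * t + 5 - 2 = 2 * t + 3 by omega]
    rw [show (2 * t + 2) ^ 2 = 4 * (t * t + 2 * t + 1) by ring]
    rw [show (2 * t + 3) ^ 2 = 4 * (t * t + 3 * t + 2) + 1 by ring]
    omega
  · rw [show 2 * t + 6 - 3 = 2 * t + 3 by omega, show 2 * t + 6 - 2 = 2 * t + 4 by omega]
    rw [show (2 * t + 3) ^ 2 = 4 * (t * t + 3 * t + 2) + 1 by ring]
    rw [show (2 * t + 4) ^ 2 = 4 * (t * t + 4 * t + 4) by ring]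
    omega

end Aux

section Star

lemma star_mixed (N w : ℕ) (A B : Finset (ℕ × ℕ))
    (goodA : ∀ d ∈ A, Good N d) (goodB : ∀ d ∈ B, Good N d)
    (hBne : B.Nonempty)
    (hcross : ∀ a ∈ A, ∀ b ∈ B, Crosses a b)
    (hstar : ∀ a ∈ A, a.1 = w ∨ a.2 = w)
    (h1 : ∃ a ∈ A, a.2 = w) (h2 : ∃ a ∈ A, a.1 = w) :
    A.card + B.card ≤ (N - 2) ^ 2 / 4 + 1 := by
  classical
  set Alo := A.filter (fun a => a.2 = w) with hAlodef
  set Ahi := A.filter (fun a => ¬ a.2 = w) with hAhidef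
  have hAloNe : Alo.Nonempty := by
    obtain ⟨a, ha, h⟩ := h1
    exact ⟨a, Finset.mem_filter.mpr ⟨ha, h⟩⟩
  have hAhiNe : Ahi.Nonempty := by
    obtain ⟨a, ha, h⟩ := h2
    obtain ⟨g1, g2, g3⟩ := goodA a ha
    exact ⟨a, Finset.mem_filter.mpr ⟨ha, by omega⟩⟩
  have hFne : (Alo.image Prod.fst).Nonempty := hAloNe.image _
  have hGne : (Ahi.image Prod.snd).Nonempty := hAhiNe.image _
  set a' := (Alo.image Prod.fst).max' hFne with ha'def
  set b' := (Ahi.image Prod.snd).min' hGne with hb'def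
  have ha'A : (a', w) ∈ A := by
    obtain ⟨d, hd, hfst⟩ := Finset.mem_image.mp ((Alo.image Prod.fst).max'_mem hFne)
    have hd2 := (Finset.mem_filter.mp hd).2
    have hdA := (Finset.mem_filter.mp hd).1
    have : d = (a', w) := Prod.ext_iff.mpr ⟨hfst, hd2⟩
    rwa [← this]
  have hb'A : (w, b') ∈ A := by
    obtain ⟨d, hd, hsnd⟩ := Finset.mem_image.mp ((Ahi.image Prod.snd).min'_mem hGne)
    have hd2 := (Finset.mem_filter.mp hd).2
    have hdA := (Finset.mem_filter.mp hd).1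
    have hd1 : d.1 = w := by rcases hstar d hdA with h | h; exact h; exact absurd h hd2
    have : d = (w, b') := Prod.ext_iff.mpr ⟨hd1, hsnd⟩
    rwa [← this]
  obtain ⟨ga1, ga2, ga3⟩ := goodA _ ha'A
  obtain ⟨gb1, gb2, gb3⟩ := goodA _ hb'A
  simp only at ga1 ga2 ga3 gb1 gb2 gb3
  -- card of Alo
  have hAloCard : Alo.card ≤ a' := by
    have hinj : Set.InjOn (Prod.fst : ℕ × ℕ → ℕ) ↑Alo := by
      intro x hx y hy hxy
      have hx2 := (Finset.mem_filter.mp (Finset.mem_coe.mp hx)).2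
      have hy2 := (Finset.mem_filter.mp (Finset.mem_coe.mp hy)).2
      exact Prod.ext_iff.mpr ⟨hxy, by rw [hx2, hy2]⟩
    have hcardeq : (Alo.image Prod.fst).card = Alo.card := Finset.card_image_of_injOn hinj
    have hsub : Alo.image Prod.fst ⊆ Finset.Icc 1 a' := by
      intro x hx
      obtain ⟨d, hd, rfl⟩ := Finset.mem_image.mp hx
      have hdA := (Finset.mem_filter.mp hd).1
      obtain ⟨g1, _, _⟩ := goodA d hdA
      exact Finset.mem_Icc.mpr ⟨g1, Finset.le_max' _ _ (Finset.mem_image_of_mem _ hd)⟩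
    have := Finset.card_le_card hsub
    rw [Nat.card_Icc] at this
    omega
  have hAhiCard : Ahi.card ≤ N + 1 - b' := by
    have hinj : Set.InjOn (Prod.snd : ℕ × ℕ → ℕ) ↑Ahi := by
      intro x hx y hy hxy
      have hxA := (Finset.mem_filter.mp (Finset.mem_coe.mp hx))
      have hyA := (Finset.mem_filter.mp (Finset.mem_coe.mp hy))
      have hx1 : x.1 = w := by rcases hstar x hxA.1 with h | h; exact h; exact absurd h hxA.2
      have hy1 : y.1 = w := by rcases hstar y hyA.1 with h | h; exact h; exact absurd h hyA.2
      exact Prod.ext_iff.mpr ⟨by rw [hx1, hy1], hxy⟩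
    have hcardeq : (Ahi.image Prod.snd).card = Ahi.card := Finset.card_image_of_injOn hinj
    have hsub : Ahi.image Prod.snd ⊆ Finset.Icc b' N := by
      intro x hx
      obtain ⟨d, hd, rfl⟩ := Finset.mem_image.mp hx
      have hdA := (Finset.mem_filter.mp hd).1
      obtain ⟨_, _, g3⟩ := goodA d hdA
      exact Finset.mem_Icc.mpr ⟨Finset.min'_le _ _ (Finset.mem_image_of_mem _ hd), g3⟩
    have := Finset.card_le_card hsub
    rw [Nat.card_Icc] at this
    omega
  have hBsub : B ⊆ Finset.Icc (a' + 1) (w - 1) ×ˢ Finset.Icc (w + 1) (b' - 1) := by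
    intro b hb
    have hc1 := hcross _ ha'A _ hb
    have hc2 := hcross _ hb'A _ hb
    obtain ⟨gbb1, gbb2, gbb3⟩ := goodB b hb
    simp only [Finset.mem_product, Finset.mem_Icc]
    unfold Crosses at hc1 hc2
    simp only at hc1 hc2
    omega
  have hBcard : B.card ≤ (w - 1 - a') * (b' - 1 - w) := by
    have := Finset.card_le_card hBsub
    simp only [Finset.card_product, Nat.card_Icc] at this
    have e1 : w - 1 + 1 - (a' + 1) = w - 1 - a' := by omega
    have e2 : b' - 1 + 1 - (w + 1) = b' - 1 - w := by omega
    rw [e1, e2] at this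
    exact this
  have hps : a' + 2 ≤ w ∧ w + 2 ≤ b' := by
    obtain ⟨b, hb⟩ := hBne
    have := hBsub hb
    simp only [Finset.mem_product, Finset.mem_Icc] at this
    omega
  have hAcard : A.card = Alo.card + Ahi.card :=
    (Finset.card_filter_add_card_filter_not (s := A) (fun a => a.2 = w)).symm
  have := mixed_arith N w a' b' ga1 hps.1 hps.2 gb3
  omega

lemma star_low (N w : ℕ) (A B : Finset (ℕ × ℕ))
    (goodA : ∀ d ∈ A, Good N d) (goodB : ∀ d ∈ B, Good N d)
    (hAne : A.Nonempty) (hBne : B.Nonempty)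
    (hcross : ∀ a ∈ A, ∀ b ∈ B, Crosses a b)
    (hstar : ∀ a ∈ A, a.2 = w) :
    A.card + B.card ≤ (N - 2) ^ 2 / 4 + 1 := by
  classical
  have hFne : (A.image Prod.fst).Nonempty := hAne.image _
  set a' := (A.image Prod.fst).max' hFne with ha'def
  set m := (A.image Prod.fst).min' hFne with hmdef
  have ha'A : (a', w) ∈ A := by
    obtain ⟨d, hd, hfst⟩ := Finset.mem_image.mp ((A.image Prod.fst).max'_mem hFne)
    have : d = (a', w) := Prod.ext_iff.mpr ⟨hfst, hstar d hd⟩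
    rwa [← this]
  have hmA : (m, w) ∈ A := by
    obtain ⟨d, hd, hfst⟩ := Finset.mem_image.mp ((A.image Prod.fst).min'_mem hFne)
    have : d = (m, w) := Prod.ext_iff.mpr ⟨hfst, hstar d hd⟩
    rwa [← this]
  obtain ⟨ga1, ga2, ga3⟩ := goodA _ ha'A
  obtain ⟨gm1, gm2, gm3⟩ := goodA _ hmA
  simp only at ga1 ga2 ga3 gm1 gm2 gm3
  have hma' : m ≤ a' := by
    exact Finset.min'_le _ _ ((A.image Prod.fst).max'_mem hFne)
  have hAcard : A.card ≤ a' - m + 1 := by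
    have hinj : Set.InjOn (Prod.fst : ℕ × ℕ → ℕ) ↑A := by
      intro x hx y hy hxy
      exact Prod.ext_iff.mpr ⟨hxy, by
        rw [hstar x (Finset.mem_coe.mp hx), hstar y (Finset.mem_coe.mp hy)]⟩
    have hcardeq : (A.image Prod.fst).card = A.card := Finset.card_image_of_injOn hinj
    have hsub : A.image Prod.fst ⊆ Finset.Icc m a' := by
      intro x hx
      exact Finset.mem_Icc.mpr ⟨Finset.min'_le _ _ hx, Finset.le_max' _ _ hx⟩
    have := Finset.card_le_card hsub
    rw [Nat.card_Icc] at this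
    omega
  have hBsub : B ⊆ (Finset.Icc (a' + 1) (w - 1) ×ˢ Finset.Icc (w + 1) N) ∪
      (Finset.Icc 1 (m - 1) ×ˢ Finset.Icc (a' + 1) (w - 1)) := by
    intro b hb
    have hc1 := hcross _ ha'A _ hb
    have hc2 := hcross _ hmA _ hb
    obtain ⟨gbb1, gbb2, gbb3⟩ := goodB b hb
    simp only [Finset.mem_union, Finset.mem_product, Finset.mem_Icc]
    unfold Crosses at hc1 hc2
    simp only at hc1 hc2
    omega
  have hBcard : B.card ≤ (w - 1 - a') * (N - w) + (m - 1) * (w - 1 - a') := by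
    have h1 := Finset.card_le_card hBsub
    have h2 := Finset.card_union_le (Finset.Icc (a' + 1) (w - 1) ×ˢ Finset.Icc (w + 1) N)
      (Finset.Icc 1 (m - 1) ×ˢ Finset.Icc (a' + 1) (w - 1))
    simp only [Finset.card_product, Nat.card_Icc] at h2
    have e1 : w - 1 + 1 - (a' + 1) = w - 1 - a' := by omega
    have e2 : N + 1 - (w + 1) = N - w := by omega
    have e3 : m - 1 + 1 - 1 = m - 1 := by omega
    rw [e1, e2, e3] at h2
    omega
  have hp : a' + 2 ≤ w := by
    obtain ⟨b, hb⟩ := hBne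
    have := hBsub hb
    simp only [Finset.mem_union, Finset.mem_product, Finset.mem_Icc] at this
    omega
  have := star_low_arith N w m a' gm1 hma' hp ga3
  omega

end Star

section Main

def reflPair (N : ℕ) (d : ℕ × ℕ) : ℕ × ℕ := (N + 1 - d.2, N + 1 - d.1)

lemma refl_good {N : ℕ} {d : ℕ × ℕ} (h : Good N d) : Good N (reflPair N d) := by
  obtain ⟨h1, h2, h3⟩ := h
  unfold Good reflPair
  simp only
  omega

lemma refl_cross {N : ℕ} {d e : ℕ × ℕ} (hd : Good N d) (he : Good N e)
    (h : Crosses d e) : Crosses (reflPair N d) (reflPair N e) := by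
  obtain ⟨h1, h2, h3⟩ := hd
  obtain ⟨k1, k2, k3⟩ := he
  unfold Crosses reflPair at *
  simp only at *
  omega

lemma refl_inj {N : ℕ} {d e : ℕ × ℕ} (hd : Good N d) (he : Good N e)
    (h : reflPair N d = reflPair N e) : d = e := by
  obtain ⟨h1, h2, h3⟩ := hd
  obtain ⟨k1, k2, k3⟩ := he
  rw [Prod.ext_iff] at h ⊢
  unfold reflPair at h
  simp only at h
  omega

lemma star_all (N w : ℕ) (A B : Finset (ℕ × ℕ))
    (goodA : ∀ d ∈ A, Good N d) (goodB : ∀ d ∈ B, Good N d)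
    (hAne : A.Nonempty) (hBne : B.Nonempty)
    (hcross : ∀ a ∈ A, ∀ b ∈ B, Crosses a b)
    (hstar : ∀ a ∈ A, a.1 = w ∨ a.2 = w) :
    A.card + B.card ≤ (N - 2) ^ 2 / 4 + 1 := by
  classical
  by_cases h1 : ∃ a ∈ A, a.2 = w
  · by_cases h2 : ∃ a ∈ A, a.1 = w
    · exact star_mixed N w A B goodA goodB hBne hcross hstar h1 h2
    · push_neg at h2
      have hlow : ∀ a ∈ A, a.2 = w := by
        intro a ha
        rcases hstar a ha with h | h
        · exact absurd h (h2 a ha)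
        · exact h
      exact star_low N w A B goodA goodB hAne hBne hcross hlow
  · push_neg at h1
    have hhi : ∀ a ∈ A, a.1 = w := by
      intro a ha
      rcases hstar a ha with h | h
      · exact h
      · exact absurd h (h1 a ha)
    -- reflect
    set A' := A.image (reflPair N) with hA'
    set B' := B.image (reflPair N) with hB'
    have goodA' : ∀ d ∈ A', Good N d := by
      intro d hd
      obtain ⟨a, ha, rfl⟩ := Finset.mem_image.mp hd
      exact refl_good (goodA a ha)
    have goodB' : ∀ d ∈ B', Good N d := by
      intro d hd
      obtain ⟨b, hb, rfl⟩ := Finset.mem_image.mp hd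
      exact refl_good (goodB b hb)
    have hcross' : ∀ a ∈ A', ∀ b ∈ B', Crosses a b := by
      intro a ha b hb
      obtain ⟨a0, ha0, rfl⟩ := Finset.mem_image.mp ha
      obtain ⟨b0, hb0, rfl⟩ := Finset.mem_image.mp hb
      exact refl_cross (goodA a0 ha0) (goodB b0 hb0) (hcross a0 ha0 b0 hb0)
    have hstar' : ∀ a ∈ A', a.2 = N + 1 - w := by
      intro a ha
      obtain ⟨a0, ha0, rfl⟩ := Finset.mem_image.mp ha
      unfold reflPair
      simp only
      rw [hhi a0 ha0]
    have hcardA : A'.card = A.card :=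
      Finset.card_image_of_injOn (fun x hx y hy h =>
        refl_inj (goodA x (Finset.mem_coe.mp hx)) (goodA y (Finset.mem_coe.mp hy)) h)
    have hcardB : B'.card = B.card :=
      Finset.card_image_of_injOn (fun x hx y hy h =>
        refl_inj (goodB x (Finset.mem_coe.mp hx)) (goodB y (Finset.mem_coe.mp hy)) h)
    have := star_low N (N + 1 - w) A' B' goodA' goodB' (hAne.image _) (hBne.image _)
      hcross' hstar'
    omega

def squash (w : ℕ) (d : ℕ × ℕ) : ℕ × ℕ :=
  (if d.1 < w then d.1 else d.1 - 1, if d.2 < w then d.2 else d.2 - 1)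

lemma delete_bound (N w : ℕ) (hw1 : 1 ≤ w) (hwN : w ≤ N) (A B : Finset (ℕ × ℕ))
    (goodA : ∀ d ∈ A, Good N d) (goodB : ∀ d ∈ B, Good N d)
    (hAw : ∀ d ∈ A, d.1 ≠ w ∧ d.2 ≠ w) (hBw : ∀ d ∈ B, d.1 ≠ w ∧ d.2 ≠ w)
    (hAne : A.Nonempty) (hBne : B.Nonempty)
    (hcross : ∀ a ∈ A, ∀ b ∈ B, Crosses a b)
    (IH : Bound (N - 1)) :
    A.card + B.card ≤ (N - 3) ^ 2 / 4 + 1 := by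
  classical
  have hgf : ∀ d, Good N d → d.1 ≠ w → d.2 ≠ w → Good (N - 1) (squash w d) := by
    intro d hd h1 h2
    obtain ⟨g1, g2, g3⟩ := hd
    unfold Good squash
    simp only
    split_ifs <;> omega
  have hinj : ∀ d e : ℕ × ℕ, d.1 ≠ w → d.2 ≠ w → e.1 ≠ w → e.2 ≠ w →
      squash w d = squash w e → d = e := by
    intro d e h1 h2 h3 h4 h
    rw [Prod.ext_iff] at h ⊢
    unfold squash at h
    simp only at h
    obtain ⟨ha, hb⟩ := h
    constructor
    · split_ifs at ha <;> omega
    · split_ifs at hb <;> omega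
  have hcrossf : ∀ d e : ℕ × ℕ, d.1 ≠ w → d.2 ≠ w → e.1 ≠ w → e.2 ≠ w →
      Crosses d e → Crosses (squash w d) (squash w e) := by
    intro d e h1 h2 h3 h4 h
    unfold Crosses squash at *
    simp only at *
    split_ifs <;> omega
  set A' := A.image (squash w) with hA'
  set B' := B.image (squash w) with hB'
  have hcardA : A'.card = A.card :=
    Finset.card_image_of_injOn (fun x hx y hy h => by
      have hx' := hAw x (Finset.mem_coe.mp hx)
      have hy' := hAw y (Finset.mem_coe.mp hy)
      exact hinj x y hx'.1 hx'.2 hy'.1 hy'.2 h)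
  have hcardB : B'.card = B.card :=
    Finset.card_image_of_injOn (fun x hx y hy h => by
      have hx' := hBw x (Finset.mem_coe.mp hx)
      have hy' := hBw y (Finset.mem_coe.mp hy)
      exact hinj x y hx'.1 hx'.2 hy'.1 hy'.2 h)
  have goodA' : ∀ d ∈ A', Good (N - 1) d := by
    intro d hd
    obtain ⟨a, ha, rfl⟩ := Finset.mem_image.mp hd
    exact hgf a (goodA a ha) (hAw a ha).1 (hAw a ha).2
  have goodB' : ∀ d ∈ B', Good (N - 1) d := by
    intro d hd
    obtain ⟨b, hb, rfl⟩ := Finset.mem_image.mp hd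
    exact hgf b (goodB b hb) (hBw b hb).1 (hBw b hb).2
  have hcross' : ∀ a ∈ A', ∀ b ∈ B', Crosses a b := by
    intro a ha b hb
    obtain ⟨a0, ha0, rfl⟩ := Finset.mem_image.mp ha
    obtain ⟨b0, hb0, rfl⟩ := Finset.mem_image.mp hb
    exact hcrossf a0 b0 (hAw a0 ha0).1 (hAw a0 ha0).2 (hBw b0 hb0).1 (hBw b0 hb0).2
      (hcross a0 ha0 b0 hb0)
  have := IH A' B' goodA' goodB' (hAne.image _) (hBne.image _) hcross'
  have hNe : N - 1 - 2 = N - 3 := by omega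
  rw [hNe] at this
  omega

lemma side (N w : ℕ) (hN : 5 ≤ N) (hw1 : 1 ≤ w) (hwN : w ≤ N)
    (A B : Finset (ℕ × ℕ))
    (goodA : ∀ d ∈ A, Good N d) (goodB : ∀ d ∈ B, Good N d)
    (hAne : A.Nonempty) (hBne : B.Nonempty)
    (hcross : ∀ a ∈ A, ∀ b ∈ B, Crosses a b)
    (hAdeg : (A.filter (fun d => d.1 = w ∨ d.2 = w)).card ≤ (N - 2) / 2)
    (hBw : ∀ b ∈ B, b.1 ≠ w ∧ b.2 ≠ w)
    (IH : Bound (N - 1)) :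
    A.card + B.card ≤ (N - 2) ^ 2 / 4 + 1 := by
  classical
  by_cases hAall : ∀ a ∈ A, a.1 = w ∨ a.2 = w
  · exact star_all N w A B goodA goodB hAne hBne hcross hAall
  · push_neg at hAall
    obtain ⟨a0, ha0, ha0w⟩ := hAall
    set A2 := A.filter (fun a => ¬(a.1 = w ∨ a.2 = w)) with hA2
    have hA2ne : A2.Nonempty := ⟨a0, Finset.mem_filter.mpr ⟨ha0, by omega⟩⟩
    have hdel := delete_bound N w hw1 hwN A2 B
      (fun d hd => goodA d (Finset.mem_filter.mp hd).1) goodB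
      (fun d hd => by have := (Finset.mem_filter.mp hd).2; push_neg at this; exact this)
      hBw
      hA2ne hBne
      (fun a ha b hb => hcross a (Finset.mem_filter.mp ha).1 b hb)
      IH
    have hsplit : (A.filter (fun d => d.1 = w ∨ d.2 = w)).card + A2.card = A.card :=
      Finset.card_filter_add_card_filter_not _
    have := arith2 N hN
    omega

lemma no_big (N : ℕ) (hN : 5 ≤ N) (A B : Finset (ℕ × ℕ))
    (goodA : ∀ d ∈ A, Good N d) (goodB : ∀ d ∈ B, Good N d)
    (hAne : A.Nonempty) (hBne : B.Nonempty)
    (hcross : ∀ a ∈ A, ∀ b ∈ B, Crosses a b)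
    (hcard : A.card + B.card = (N - 2) ^ 2 / 4 + 2)
    (IH : Bound (N - 1)) : False := by
  classical
  have hdisj : Disjoint A B := by
    rw [Finset.disjoint_left]
    intro a ha hb
    have := hcross a ha a hb
    unfold Crosses at this
    omega
  set D := A ∪ B with hD
  have hDcard : D.card = (N - 2) ^ 2 / 4 + 2 := by
    rw [hD, Finset.card_union_of_disjoint hdisj, hcard]
  have hDgood : ∀ d ∈ D, Good N d := by
    intro d hd
    rcases Finset.mem_union.mp hd with h | h
    · exact goodA d h
    · exact goodB d h
  -- handshake
  have hswap : ∑ w ∈ Finset.Icc 1 N, (D.filter (fun d => d.1 = w ∨ d.2 = w)).card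
      = 2 * D.card := by
    have h1 : ∀ w, (D.filter (fun d => d.1 = w ∨ d.2 = w)).card
        = ∑ d ∈ D, if d.1 = w ∨ d.2 = w then 1 else 0 := by
      intro w; exact Finset.card_filter _ _
    calc ∑ w ∈ Finset.Icc 1 N, (D.filter (fun d => d.1 = w ∨ d.2 = w)).card
        = ∑ w ∈ Finset.Icc 1 N, ∑ d ∈ D, if d.1 = w ∨ d.2 = w then 1 else 0 := by
          exact Finset.sum_congr rfl (fun w _ => h1 w)
      _ = ∑ d ∈ D, ∑ w ∈ Finset.Icc 1 N, if d.1 = w ∨ d.2 = w then 1 else 0 :=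
          Finset.sum_comm
      _ = ∑ d ∈ D, ((Finset.Icc 1 N).filter (fun w => d.1 = w ∨ d.2 = w)).card := by
          exact Finset.sum_congr rfl (fun d _ => (Finset.card_filter _ _).symm)
      _ = ∑ d ∈ D, 2 := by
          refine Finset.sum_congr rfl (fun d hd => ?_)
          obtain ⟨g1, g2, g3⟩ := hDgood d hd
          have : (Finset.Icc 1 N).filter (fun w => d.1 = w ∨ d.2 = w) = {d.1, d.2} := by
            ext x
            simp only [Finset.mem_filter, Finset.mem_Icc, Finset.mem_insert,
              Finset.mem_singleton]
            constructor
            · intro ⟨_, h⟩; omega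
            · intro h; omega
          rw [this]
          rw [Finset.card_insert_of_notMem (by simp only [Finset.mem_singleton]; omega)]
          simp
      _ = 2 * D.card := by rw [Finset.sum_const, smul_eq_mul]; ring
  have hex : ∃ w ∈ Finset.Icc 1 N, (D.filter (fun d => d.1 = w ∨ d.2 = w)).card ≤ (N - 2) / 2 := by
    by_contra hcon
    push_neg at hcon
    have hge : ∀ w ∈ Finset.Icc 1 N,
        (N - 2) / 2 + 1 ≤ (D.filter (fun d => d.1 = w ∨ d.2 = w)).card :=
      fun w hw => hcon w hw
    have hsum2 : ∑ w ∈ Finset.Icc 1 N, ((N - 2) / 2 + 1)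
        ≤ ∑ w ∈ Finset.Icc 1 N, (D.filter (fun d => d.1 = w ∨ d.2 = w)).card :=
      Finset.sum_le_sum hge
    rw [Finset.sum_const, smul_eq_mul, Nat.card_Icc] at hsum2
    rw [hswap, hDcard] at hsum2
    have harith := arith1 N hN
    have he : N + 1 - 1 = N := by omega
    rw [he] at hsum2
    omega
  obtain ⟨w, hwIcc, hwdeg⟩ := hex
  rw [Finset.mem_Icc] at hwIcc
  by_cases hBw : ∃ b ∈ B, b.1 = w ∨ b.2 = w
  · by_cases hAw : ∃ a ∈ A, a.1 = w ∨ a.2 = w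
    · obtain ⟨b, hb, hbw⟩ := hBw
      obtain ⟨a, ha, haw⟩ := hAw
      have hc := hcross a ha b hb
      obtain ⟨ga1, ga2, ga3⟩ := goodA a ha
      obtain ⟨gb1, gb2, gb3⟩ := goodB b hb
      unfold Crosses at hc
      omega
    · push_neg at hAw
      have hdeg : (B.filter (fun d => d.1 = w ∨ d.2 = w)).card ≤ (N - 2) / 2 := by
        refine le_trans (Finset.card_le_card ?_) hwdeg
        exact Finset.filter_subset_filter _ Finset.subset_union_right
      have := side N w hN hwIcc.1 hwIcc.2 B A goodB goodA hBne hAne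
        (fun b hb a ha => crosses_symm (hcross a ha b hb)) hdeg
        (fun a ha => by have := hAw a ha; omega) IH
      omega
  · push_neg at hBw
    have hdeg : (A.filter (fun d => d.1 = w ∨ d.2 = w)).card ≤ (N - 2) / 2 := by
      refine le_trans (Finset.card_le_card ?_) hwdeg
      exact Finset.filter_subset_filter _ Finset.subset_union_left
    have := side N w hN hwIcc.1 hwIcc.2 A B goodA goodB hAne hBne hcross hdeg
      (fun b hb => by have := hBw b hb; omega) IH
    omega

theorem lemL : ∀ N, Bound N := by
  intro N
  induction N using Nat.strong_induction_on with
  | _ N IH =>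
  intro A B goodA goodB hAne hBne hcross
  obtain ⟨a0, ha0⟩ := hAne
  obtain ⟨b0, hb0⟩ := hBne
  rcases le_or_gt N 3 with hN3 | hN3
  · exfalso
    have hc := hcross a0 ha0 b0 hb0
    obtain ⟨g1, g2, g3⟩ := goodA a0 ha0
    obtain ⟨k1, k2, k3⟩ := goodB b0 hb0
    unfold Crosses at hc
    omega
  rcases le_or_gt N 4 with hN4 | hN4
  · have hN : N = 4 := by omega
    subst hN
    have hA1 : A.card ≤ 1 := by
      rw [Finset.card_le_one]
      intro a ha a' ha'
      have hc := hcross a ha b0 hb0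
      have hc' := hcross a' ha' b0 hb0
      obtain ⟨g1, g2, g3⟩ := goodA a ha
      obtain ⟨g1', g2', g3'⟩ := goodA a' ha'
      obtain ⟨k1, k2, k3⟩ := goodB b0 hb0
      unfold Crosses at hc hc'
      have : a.1 = a'.1 ∧ a.2 = a'.2 := by omega
      exact Prod.ext_iff.mpr this
    have hB1 : B.card ≤ 1 := by
      rw [Finset.card_le_one]
      intro b hb b' hb'
      have hc := hcross a0 ha0 b hb
      have hc' := hcross a0 ha0 b' hb'
      obtain ⟨g1, g2, g3⟩ := goodB b hb
      obtain ⟨g1', g2', g3'⟩ := goodB b' hb'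
      obtain ⟨k1, k2, k3⟩ := goodA a0 ha0
      unfold Crosses at hc hc'
      have : b.1 = b'.1 ∧ b.2 = b'.2 := by omega
      exact Prod.ext_iff.mpr this
    norm_num
    omega
  · -- N ≥ 5
    have hN5 : 5 ≤ N := by omega
    by_contra hbig
    push_neg at hbig
    have hIH : Bound (N - 1) := IH (N - 1) (by omega)
    set Q := (N - 2) ^ 2 / 4 with hQ
    rcases le_or_gt (Q + 1) B.card with hB | hB
    · obtain ⟨B', hB'sub, hB'card⟩ := Finset.exists_subset_card_eq hB
      have hB'ne : B'.Nonempty := Finset.card_pos.mp (by omega)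
      exact no_big N hN5 {a0} B'
        (fun d hd => by rw [Finset.mem_singleton] at hd; rw [hd]; exact goodA a0 ha0)
        (fun d hd => goodB d (hB'sub hd))
        ⟨a0, Finset.mem_singleton_self a0⟩ hB'ne
        (fun a ha b hb => by
          rw [Finset.mem_singleton] at ha; rw [ha]
          exact hcross a0 ha0 b (hB'sub hb))
        (by rw [Finset.card_singleton]; omega) hIH
    · have hAge : Q + 2 - B.card ≤ A.card := by omega
      obtain ⟨A', hA'sub, hA'card⟩ := Finset.exists_subset_card_eq hAge
      have hA'ne : A'.Nonempty := Finset.card_pos.mp (by omega)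
      exact no_big N hN5 A' B
        (fun d hd => goodA d (hA'sub hd)) goodB hA'ne ⟨b0, hb0⟩
        (fun a ha b hb => hcross a (hA'sub ha) b hb)
        (by omega) hIH

end Main

lemma q_eq (n : ℕ) : q n = (n + 1) ^ 2 / 4 := by
  unfold q
  split_ifs with h
  · obtain ⟨t, rfl⟩ := h
    rw [show t + t = 2 * t by ring]
    rw [show 2 * t * (2 * t + 2) = 4 * (t * t + t) by ring]
    rw [show (2 * t + 1) ^ 2 = 4 * (t * t + t) + 1 by ring]
    omega
  · rfl


/-- Lemma 2.24: if `I` is a set of diagonals of the `(n+3)`-gon with `|I| > q(n)+1`,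
then the non-crossing graph `G(I)` is connected. -/
theorem connected_of_large (n : ℕ) (hn : 3 ≤ n) (I : Finset (ℕ × ℕ))
    (hdiag : ∀ d ∈ I, IsDiag (n + 3) d) (hcard : q n + 1 < I.card) :
    (ncGraph I).Connected := by
  classical
  have hgood : ∀ d ∈ I, Good (n + 3) d := by
    intro d hd
    obtain ⟨h1, h2, h3, _⟩ := hdiag d hd
    exact ⟨h1, by omega, h3⟩
  have hne : I.Nonempty := Finset.card_pos.mp (by omega)
  rw [SimpleGraph.connected_iff]
  constructor
  · intro u v
    by_contra huv
    set A := I.filter (fun d => ∃ (hd : d ∈ I), (ncGraph I).Reachable u ⟨d, hd⟩) with hAdef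
    set B := I \ A with hBdef
    have hu : u.1 ∈ A := Finset.mem_filter.mpr ⟨u.2, u.2, by
      exact SimpleGraph.Reachable.refl u⟩
    have hv : v.1 ∈ B := by
      refine Finset.mem_sdiff.mpr ⟨v.2, ?_⟩
      intro hmem
      obtain ⟨hd, hreach⟩ := (Finset.mem_filter.mp hmem).2
      exact huv hreach
    have hcrossAB : ∀ a ∈ A, ∀ b ∈ B, Crosses a b := by
      intro a ha b hb
      by_contra hnc
      have haI := (Finset.mem_filter.mp ha).1
      obtain ⟨hd, hreach⟩ := (Finset.mem_filter.mp ha).2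
      have hbI := (Finset.mem_sdiff.mp hb).1
      have hbA := (Finset.mem_sdiff.mp hb).2
      have hab : a ≠ b := by
        intro h
        exact hbA (h ▸ ha)
      have hadj : (ncGraph I).Adj ⟨a, hd⟩ ⟨b, hbI⟩ := by
        refine ⟨?_, ?_⟩
        · intro h
          exact hab (congrArg Subtype.val h)
        · exact hnc
      have : (ncGraph I).Reachable u ⟨b, hbI⟩ := hreach.trans hadj.reachable
      exact hbA (Finset.mem_filter.mpr ⟨hbI, hbI, this⟩)
    have hAne : A.Nonempty := ⟨u.1, hu⟩
    have hBne : B.Nonempty := ⟨v.1, hv⟩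
    have hbound := lemL (n + 3) A B
      (fun d hd => hgood d (Finset.mem_filter.mp hd).1)
      (fun d hd => hgood d (Finset.mem_sdiff.mp hd).1)
      hAne hBne hcrossAB
    have hcardB : B.card = I.card - A.card := Finset.card_sdiff_of_subset (Finset.filter_subset _ _)
    have hcardA : A.card ≤ I.card := Finset.card_filter_le _ _
    have hq : q n = (n + 3 - 2) ^ 2 / 4 := by
      have h32 : n + 3 - 2 = n + 1 := by omega
      rw [q_eq, h32]
    omega
  · exact ⟨⟨hne.choose, hne.choose_spec⟩⟩
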